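/- arXiv:2210.03878 — 2 statements merged into one kernel-verified Lean document; each statement's English description precedes it below -/
import Mathlib

section
/- Stability of the two-ends condition under passing to large subsets: Let ε ∈ (0,1), ε' with ε > ε' > ε^{100} > 0, and C₀ ≥ 1. There exist δ₀ > 0 depending only on ε, ε', C₀ and an absolute constant C > 0 such that for all 0 < δ < δ₀ the following holds. Let T be a δ×δ×1 tube in ℝ³, let Y ⊆ T be a measurable shading which is quantitative two-ends at scale ε' with constant C₀, and let Y' ⊆ Y be measurable with |Y'| ≥ δ^{ε'/4}|Y|. Then there exists a measurable subset Y'' ⊆ Y' which is quantitative two-ends at scale ε'/2 with constant 2 and which satisfies |Y''| ≥ (C log δ^{-1})^{-1}|Y'|. -/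
open MeasureTheory Metric Set
open scoped ENNReal

/-- A (parametrized) tube in `ℝ³`: a base point and a unit direction. -/
structure Tube where
  base : EuclideanSpace ℝ (Fin 3)
  dir : EuclideanSpace ℝ (Fin 3)
  dir_norm : ‖dir‖ = 1

/-- The `δ×δ×1` tube determined by `T`:
`{base + t•dir + w : t ∈ [0,1], w ⟂ dir, ‖w‖ ≤ δ}`. -/
def Tube.toSet (T : Tube) (δ : ℝ) : Set (EuclideanSpace ℝ (Fin 3)) :=
  {x | ∃ (t : ℝ) (w : EuclideanSpace ℝ (Fin 3)),
    t ∈ Set.Icc (0 : ℝ) 1 ∧ (inner ℝ w T.dir : ℝ) = 0 ∧ ‖w‖ ≤ δ ∧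
    x = T.base + t • T.dir + w}

/-- The `j`-th segment of the `δ×δ×1` tube `T` for the partition of `[0,1]`
into consecutive subintervals of length `δ^ε`. -/
def Tube.seg (T : Tube) (δ ε : ℝ) (j : ℕ) : Set (EuclideanSpace ℝ (Fin 3)) :=
  {x | ∃ (t : ℝ) (w : EuclideanSpace ℝ (Fin 3)),
    t ∈ Set.Icc (0 : ℝ) 1 ∧ t ∈ Set.Ico ((j : ℝ) * δ ^ ε) (((j : ℝ) + 1) * δ ^ ε) ∧
    (inner ℝ w T.dir : ℝ) = 0 ∧ ‖w‖ ≤ δ ∧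
    x = T.base + t • T.dir + w}

/-- A shading `Y ⊆ T` of a `δ×δ×1` tube is *quantitative two-ends at scale `ε'`
with constant `C₀`*. -/
def QuantTwoEnds (δ ε ε' C₀ : ℝ) (T : Tube) (Y : Set (EuclideanSpace ℝ (Fin 3))) : Prop :=
  (∃ a : ℝ, 0 < a ∧ ∀ j : ℕ, j < ⌈δ ^ (-ε)⌉₊ → 0 < volume (Y ∩ T.seg δ ε j) →
      ENNReal.ofReal a ≤ volume (Y ∩ T.seg δ ε j) ∧
      volume (Y ∩ T.seg δ ε j) ≤ ENNReal.ofReal (C₀ * a)) ∧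
  δ ^ (-ε') ≤ (({j : ℕ | j < ⌈δ ^ (-ε)⌉₊ ∧ 0 < volume (Y ∩ T.seg δ ε j)}).ncard : ℝ)

namespace Tube
variable (T : Tube)

/-- the parameter functional -/
noncomputable def par (T : Tube) (x : EuclideanSpace ℝ (Fin 3)) : ℝ := inner ℝ (x - T.base) T.dir

lemma inner_dir_self : (inner ℝ T.dir T.dir : ℝ) = 1 := by
  rw [real_inner_self_eq_norm_sq, T.dir_norm]; norm_num

lemma par_eq (t : ℝ) (w : EuclideanSpace ℝ (Fin 3)) (hw : (inner ℝ w T.dir : ℝ) = 0) :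
    T.par (T.base + t • T.dir + w) = t := by
  unfold par
  have : T.base + t • T.dir + w - T.base = t • T.dir + w := by abel
  rw [this, inner_add_left, real_inner_smul_left, hw, T.inner_dir_self]; ring

lemma continuous_par : Continuous T.par := by
  exact (continuous_id.sub continuous_const).inner continuous_const

lemma seg_eq (δ ε : ℝ) (j : ℕ) :
    T.seg δ ε j = T.par ⁻¹' (Set.Icc (0:ℝ) 1 ∩ Set.Ico ((j : ℝ) * δ ^ ε) (((j : ℝ) + 1) * δ ^ ε))
      ∩ {x | ‖x - T.base - T.par x • T.dir‖ ≤ δ} := by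
  ext x
  constructor
  · rintro ⟨t, w, ht1, ht2, hw, hwn, rfl⟩
    have hp := T.par_eq t w hw
    refine ⟨by rw [mem_preimage, hp]; exact ⟨ht1, ht2⟩, ?_⟩
    simp only [mem_setOf_eq, hp]
    have : T.base + t • T.dir + w - T.base - t • T.dir = w := by abel
    rw [this]; exact hwn
  · rintro ⟨hp, hn⟩
    refine ⟨T.par x, x - T.base - T.par x • T.dir, hp.1, hp.2, ?_, hn, by abel⟩
    simp only [par, inner_sub_left, real_inner_smul_left, T.inner_dir_self]
    ring

lemma seg_measurable (δ ε : ℝ) (j : ℕ) : MeasurableSet (T.seg δ ε j) := by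
  rw [seg_eq]
  refine (T.continuous_par.measurable (measurableSet_Icc.inter measurableSet_Ico)).inter ?_
  have : Continuous fun x => ‖x - T.base - T.par x • T.dir‖ :=
    ((continuous_id.sub continuous_const).sub (T.continuous_par.smul continuous_const)).norm
  exact measurableSet_le this.measurable measurable_const

lemma par_mem_of_mem_seg {δ ε : ℝ} {j : ℕ} {x} (hx : x ∈ T.seg δ ε j) :
    T.par x ∈ Set.Ico ((j : ℝ) * δ ^ ε) (((j : ℝ) + 1) * δ ^ ε) := by
  rw [seg_eq] at hx; exact hx.1.2

lemma seg_disjoint {δ ε : ℝ} (hδ : 0 < δ) {i j : ℕ} (hij : i ≠ j) :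
    Disjoint (T.seg δ ε i) (T.seg δ ε j) := by
  rw [Set.disjoint_left]
  intro x hxi hxj
  have h1 := T.par_mem_of_mem_seg hxi
  have h2 := T.par_mem_of_mem_seg hxj
  have hpos : (0:ℝ) < δ ^ ε := Real.rpow_pos_of_pos hδ ε
  rcases hij.lt_or_gt with h | h
  · have : ((i:ℝ)+1) * δ ^ ε ≤ (j:ℝ) * δ ^ ε := by
      apply mul_le_mul_of_nonneg_right _ hpos.le
      exact_mod_cast Nat.succ_le_of_lt h
    exact absurd (h2.1.trans_lt h1.2) (not_lt.2 this)
  · have : ((j:ℝ)+1) * δ ^ ε ≤ (i:ℝ) * δ ^ ε := by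
      apply mul_le_mul_of_nonneg_right _ hpos.le
      exact_mod_cast Nat.succ_le_of_lt h
    exact absurd (h1.1.trans_lt h2.2) (not_lt.2 this)

/-- The t=1 slice lies in a hyperplane. -/
lemma toSet_subset_union (δ ε : ℝ) (hδ : 0 < δ) (hδ1 : δ < 1) (hε : 0 < ε) :
    T.toSet δ ⊆ (⋃ j ∈ Finset.range ⌈δ ^ (-ε)⌉₊, T.seg δ ε j) ∪ {x | T.par x = 1} := by
  rintro x ⟨t, w, ht, hw, hwn, rfl⟩
  have hp := T.par_eq t w hw
  rcases eq_or_lt_of_le ht.2 with h1 | h1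
  · right; simpa [h1] using hp
  · left
    have hpos : (0:ℝ) < δ ^ ε := Real.rpow_pos_of_pos hδ ε
    set j := ⌊t / δ ^ ε⌋₊ with hj
    have hd : t / δ ^ ε < ⌈δ ^ (-ε)⌉₊ := by
      have h2 : t / δ ^ ε < δ ^ (-ε) := by
        rw [Real.rpow_neg hδ.le, div_lt_iff₀ hpos ]
        rw [inv_mul_cancel₀ hpos.ne']
        exact h1
      exact h2.trans_le (Nat.le_ceil _)
    have hjlt : j < ⌈δ ^ (-ε)⌉₊ := by
      rw [hj, Nat.floor_lt (div_nonneg ht.1 hpos.le)]; exact hd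
    refine Set.mem_biUnion (Finset.mem_range.2 hjlt) ?_
    refine ⟨t, w, ht, ?_, hw, hwn, rfl⟩
    constructor
    · exact (le_div_iff₀ hpos).1 (Nat.floor_le (div_nonneg ht.1 hpos.le))
    · exact_mod_cast (div_lt_iff₀ hpos).1 (Nat.lt_floor_add_one (t / δ ^ ε))

lemma hyperplane_null : volume {x : EuclideanSpace ℝ (Fin 3) | T.par x = 1} = 0 := by
  classical
  set s := AffineSubspace.mk' (T.base + T.dir)
    (LinearMap.ker ((innerSL ℝ T.dir).toLinearMap)) with hs
  have hset : {x : EuclideanSpace ℝ (Fin 3) | T.par x = 1} = ↑s := by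
    ext x
    rw [mem_setOf_eq, SetLike.mem_coe, hs, AffineSubspace.mem_mk',
      LinearMap.mem_ker]
    have : x -ᵥ (T.base + T.dir) = x - T.base - T.dir := by
      simp [vsub_eq_sub]; abel
    rw [this]
    simp only [ContinuousLinearMap.coe_coe, innerSL_apply_apply]
    rw [real_inner_comm, inner_sub_left, T.inner_dir_self]
    unfold par
    constructor <;> intro h <;> linarith
  rw [hset]
  apply MeasureTheory.Measure.addHaar_affineSubspace
  intro htop
  have : T.dir ∈ s.direction := by rw [htop, AffineSubspace.direction_top]; trivial
  rw [hs, AffineSubspace.direction_mk', LinearMap.mem_ker] at this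
  simp only [ContinuousLinearMap.coe_coe, innerSL_apply_apply, T.inner_dir_self] at this
  exact one_ne_zero this

end Tube

namespace Tube2
open Tube
variable (T : Tube)

lemma measure_decomp {δ ε : ℝ} (hδ : 0 < δ) (hδ1 : δ < 1) (hε : 0 < ε)
    {Z : Set (EuclideanSpace ℝ (Fin 3))} (hZm : MeasurableSet Z) (hZ : Z ⊆ T.toSet δ) :
    volume Z = ∑ j ∈ Finset.range ⌈δ ^ (-ε)⌉₊, volume (Z ∩ T.seg δ ε j) := by
  have hdisj : (↑(Finset.range ⌈δ ^ (-ε)⌉₊) : Set ℕ).PairwiseDisjoint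
      (fun j => Z ∩ T.seg δ ε j) := by
    intro i _ j _ hij
    exact (T.seg_disjoint hδ hij).mono inter_subset_right inter_subset_right
  have hmeas : ∀ j ∈ Finset.range ⌈δ ^ (-ε)⌉₊, MeasurableSet (Z ∩ T.seg δ ε j) :=
    fun j _ => hZm.inter (T.seg_measurable δ ε j)
  have hU := measure_biUnion_finset (μ := volume) hdisj hmeas
  apply le_antisymm
  · have hsub : Z ⊆ (⋃ j ∈ Finset.range ⌈δ ^ (-ε)⌉₊, Z ∩ T.seg δ ε j) ∪
        {x | T.par x = 1} := by
      intro x hx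
      rcases T.toSet_subset_union δ ε hδ hδ1 hε (hZ hx) with h | h
      · left
        rcases mem_iUnion₂.1 h with ⟨j, hj, hxj⟩
        exact mem_iUnion₂.2 ⟨j, hj, hx, hxj⟩
      · right; exact h
    calc volume Z ≤ volume ((⋃ j ∈ Finset.range ⌈δ ^ (-ε)⌉₊, Z ∩ T.seg δ ε j) ∪
          {x | T.par x = 1}) := measure_mono hsub
      _ ≤ volume (⋃ j ∈ Finset.range ⌈δ ^ (-ε)⌉₊, Z ∩ T.seg δ ε j) +
          volume {x | T.par x = 1} := measure_union_le _ _
      _ = ∑ j ∈ Finset.range ⌈δ ^ (-ε)⌉₊, volume (Z ∩ T.seg δ ε j) := by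
          rw [T.hyperplane_null, add_zero, hU]
  · rw [← hU]
    exact measure_mono (iUnion₂_subset fun j _ => inter_subset_left)

end Tube2


lemma dyadicK (C₀ δ : ℝ) (hC₀ : 1 ≤ C₀) (hδ : 0 < δ) (hδ1 : δ < 1)
    (hElog : Real.log (4 * C₀) + 4 ≤ Real.log δ⁻¹) (hE10 : 10 ≤ Real.log δ⁻¹) :
    8 * C₀ / δ ^ 2 ≤ 2 ^ (⌈Real.logb 2 (4 * C₀ / δ ^ 2)⌉₊ + 1) ∧
    2 * ((⌈Real.logb 2 (4 * C₀ / δ ^ 2)⌉₊ : ℝ) + 1) ≤ 20 * Real.log δ⁻¹ := by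
  have hC₀pos : (0:ℝ) < C₀ := by linarith
  have hδ2 : (0:ℝ) < δ ^ 2 := by positivity
  have hδ21 : δ ^ 2 ≤ 1 := by nlinarith
  have hvpos : (0:ℝ) < 4 * C₀ / δ ^ 2 := by positivity
  have hv1 : (1:ℝ) ≤ 4 * C₀ / δ ^ 2 := by
    rw [le_div_iff₀ hδ2]; nlinarith
  set K : ℕ := ⌈Real.logb 2 (4 * C₀ / δ ^ 2)⌉₊ with hK
  have hK1 : 4 * C₀ / δ ^ 2 ≤ 2 ^ K := by
    have h1 : Real.logb 2 (4 * C₀ / δ ^ 2) ≤ (K : ℝ) := Nat.le_ceil _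
    calc 4 * C₀ / δ ^ 2 = 2 ^ Real.logb 2 (4 * C₀ / δ ^ 2) :=
          (Real.rpow_logb two_pos (by norm_num) hvpos).symm
      _ ≤ 2 ^ (K : ℝ) := Real.rpow_le_rpow_of_exponent_le one_le_two h1
      _ = 2 ^ K := by rw [Real.rpow_natCast]
  constructor
  · calc 8 * C₀ / δ ^ 2 = 2 * (4 * C₀ / δ ^ 2) := by ring
      _ ≤ 2 * 2 ^ K := by linarith
      _ = 2 ^ (K + 1) := by rw [pow_succ]; ring
  · have hlog2 : (0.6931471803 : ℝ) < Real.log 2 := Real.log_two_gt_d9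
    have h1 : (K : ℝ) < Real.logb 2 (4 * C₀ / δ ^ 2) + 1 :=
      Nat.ceil_lt_add_one (Real.logb_nonneg one_lt_two hv1)
    have h2 : Real.log (4 * C₀ / δ ^ 2) = Real.log (4 * C₀) + 2 * Real.log δ⁻¹ := by
      rw [Real.log_div (by positivity) (by positivity), Real.log_pow, Real.log_inv]
      push_cast; ring
    have hnn : 0 ≤ Real.log (4 * C₀) + 2 * Real.log δ⁻¹ := by
      have : (0:ℝ) ≤ Real.log (4 * C₀) := Real.log_nonneg (by linarith)
      linarith
    have h3 : Real.logb 2 (4 * C₀ / δ ^ 2) ≤ 2 * (Real.log (4 * C₀) + 2 * Real.log δ⁻¹) := by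
      rw [Real.logb, h2, div_le_iff₀ (by linarith)]
      nlinarith
    have h4 : Real.log (4 * C₀) ≤ Real.log δ⁻¹ := by linarith
    nlinarith

lemma exists_level (x M : ℝ) (K : ℕ) (hM : 0 < M) (hx : M / 2 ^ (K + 1) < x) (hxM : x ≤ M) :
    ∃ k, k ≤ K ∧ M / 2 ^ (k + 1) < x ∧ x ≤ M / 2 ^ k := by
  have hex : ∃ k : ℕ, M / 2 ^ (k + 1) < x := ⟨K, hx⟩
  classical
  set k := Nat.find hex with hk
  have hkK : k ≤ K := Nat.find_min' hex hx
  have hklt : M / 2 ^ (k + 1) < x := Nat.find_spec hex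
  refine ⟨k, hkK, hklt, ?_⟩
  rcases Nat.eq_zero_or_pos k with h0 | h0
  · rw [h0]; simpa using hxM
  · have := Nat.find_min hex (m := k - 1) (by omega)
    push_neg at this
    have hk1 : k - 1 + 1 = k := by omega
    rwa [hk1] at this

lemma pigeonhole (N K : ℕ) (m : ℕ → ℝ) (M : ℝ) (hM : 0 < M) (W : ℝ)
    (hmnn : ∀ j, 0 ≤ m j) (hmle : ∀ j ∈ Finset.range N, m j ≤ M)
    (hW : W ≤ ∑ j ∈ (Finset.range N).filter (fun j => M / 2 ^ (K + 1) < m j), m j) :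
    ∃ k, k ≤ K ∧ W / (K + 1) ≤
      ∑ j ∈ (Finset.range N).filter (fun j => M / 2 ^ (k + 1) < m j ∧ m j ≤ M / 2 ^ k), m j := by
  classical
  set G := (Finset.range N).filter (fun j => M / 2 ^ (K + 1) < m j) with hG
  set L : ℕ → Finset ℕ :=
    fun k => (Finset.range N).filter (fun j => M / 2 ^ (k + 1) < m j ∧ m j ≤ M / 2 ^ k) with hL
  have hGL : G = (Finset.range (K + 1)).biUnion L := by
    ext j
    simp only [hG, hL, Finset.mem_biUnion, Finset.mem_filter, Finset.mem_range]
    constructor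
    · rintro ⟨hjN, hj⟩
      obtain ⟨k, hkK, h1, h2⟩ := exists_level (m j) M K hM hj (hmle j (Finset.mem_range.2 hjN))
      exact ⟨k, by omega, hjN, h1, h2⟩
    · rintro ⟨k, hk, hjN, h1, h2⟩
      refine ⟨hjN, lt_of_le_of_lt ?_ h1⟩
      apply div_le_div_of_nonneg_left hM.le (by positivity)
      exact pow_le_pow_right₀ one_le_two (by omega)
  have hdisj : ∀ k₁ ∈ Finset.range (K + 1), ∀ k₂ ∈ Finset.range (K + 1), k₁ ≠ k₂ →
      Disjoint (L k₁) (L k₂) := by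
    intro k₁ _ k₂ _ hne
    rw [Finset.disjoint_left]
    intro j hj1 hj2
    simp only [hL, Finset.mem_filter] at hj1 hj2
    rcases hne.lt_or_gt with h | h
    · have : M / 2 ^ (k₂ + 1) ≤ M / 2 ^ (k₂ + 1) := le_refl _
      have hle : M / 2 ^ k₂ ≤ M / 2 ^ (k₁ + 1) := by
        apply div_le_div_of_nonneg_left hM.le (by positivity)
        exact pow_le_pow_right₀ one_le_two (by omega)
      linarith [hj1.2.1, hj2.2.2]
    · have hle : M / 2 ^ k₁ ≤ M / 2 ^ (k₂ + 1) := by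
        apply div_le_div_of_nonneg_left hM.le (by positivity)
        exact pow_le_pow_right₀ one_le_two (by omega)
      linarith [hj1.2.2, hj2.2.1]
  have hsum : ∑ j ∈ G, m j = ∑ k ∈ Finset.range (K + 1), ∑ j ∈ L k, m j := by
    rw [hGL, Finset.sum_biUnion]
    exact hdisj
  by_contra hcon
  push_neg at hcon
  have hlt : ∑ k ∈ Finset.range (K + 1), ∑ j ∈ L k, m j <
      ∑ k ∈ Finset.range (K + 1), W / (K + 1) := by
    apply Finset.sum_lt_sum_of_nonempty (by simp)
    intro k hk
    exact hcon k (Nat.lt_succ_iff.1 (Finset.mem_range.1 hk))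
  rw [Finset.sum_const, Finset.card_range, nsmul_eq_mul] at hlt
  have hKne : ((K:ℝ) + 1) ≠ 0 := by positivity
  have heq : ((K + 1 : ℕ) : ℝ) * (W / ((K:ℝ) + 1)) = W := by
    push_cast; field_simp
  rw [heq] at hlt
  linarith [hW.trans_eq hsum]

lemma card_bound (card : ℝ) (K : ℕ) (C₀ a δ ε' V' : ℝ)
    (hδ : 0 < δ) (ha : 0 < a) (hC₀ : 1 ≤ C₀) (hε' : 0 < ε')
    (hlog : 0 < Real.log δ⁻¹)
    (h1 : V' / (2 * ((K:ℝ) + 1)) ≤ card * (C₀ * a))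
    (hK2 : 2 * ((K:ℝ) + 1) ≤ 20 * Real.log δ⁻¹)
    (hE3 : 20 * C₀ * Real.log δ⁻¹ ≤ δ ^ (-(ε' / 4)))
    (hV'a : δ ^ (-(3 * ε' / 4)) * a ≤ V') :
    δ ^ (-(ε' / 2)) ≤ card := by
  have hC₀pos : (0:ℝ) < C₀ := by linarith
  have hXpos : (0:ℝ) < C₀ * a * (2 * ((K:ℝ) + 1)) := by positivity
  have he1 : δ ^ (-(ε' / 2)) * δ ^ (-(ε' / 4)) = δ ^ (-(3 * ε' / 4)) := by
    rw [← Real.rpow_add hδ]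
    congr 1; ring
  have hr2 : (0:ℝ) < δ ^ (-(ε' / 2)) := Real.rpow_pos_of_pos hδ _
  have hmain : δ ^ (-(ε' / 2)) * (C₀ * a * (2 * ((K:ℝ) + 1))) ≤ V' := by
    calc δ ^ (-(ε' / 2)) * (C₀ * a * (2 * ((K:ℝ) + 1)))
        ≤ δ ^ (-(ε' / 2)) * (C₀ * a * (20 * Real.log δ⁻¹)) := by
          have := mul_le_mul_of_nonneg_left hK2 (le_of_lt (by positivity : (0:ℝ) < C₀ * a))
          apply mul_le_mul_of_nonneg_left _ hr2.le
          nlinarith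
      _ = δ ^ (-(ε' / 2)) * a * (20 * C₀ * Real.log δ⁻¹) := by ring
      _ ≤ δ ^ (-(ε' / 2)) * a * δ ^ (-(ε' / 4)) := by
          apply mul_le_mul_of_nonneg_left hE3 (by positivity)
      _ = δ ^ (-(3 * ε' / 4)) * a := by rw [← he1]; ring
      _ ≤ V' := hV'a
  have hcard : V' ≤ card * (C₀ * a * (2 * ((K:ℝ) + 1))) := by
    have := mul_le_mul_of_nonneg_right h1 (le_of_lt (by positivity : (0:ℝ) < 2 * ((K:ℝ) + 1)))
    calc V' = V' / (2 * ((K:ℝ) + 1)) * (2 * ((K:ℝ) + 1)) := by field_simp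
      _ ≤ card * (C₀ * a) * (2 * ((K:ℝ) + 1)) := this
      _ = card * (C₀ * a * (2 * ((K:ℝ) + 1))) := by ring
  have := hmain.trans hcard
  exact le_of_mul_le_mul_right (by nlinarith) hXpos

lemma tail_bound (N K : ℕ) (m : ℕ → ℝ) (C₀ a δ V' : ℝ)
    (hδ : 0 < δ) (hδ1 : δ < 1) (ha : 0 < a) (hC₀ : 1 ≤ C₀)
    (hmnn : ∀ j, 0 ≤ m j)
    (hNle : (N : ℝ) ≤ 2 / δ)
    (hlvK : C₀ * a / 2 ^ (K + 1) ≤ a * δ ^ 2 / 8)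
    (hV'sum : V' = ∑ j ∈ Finset.range N, m j)
    (haV' : a ≤ V') :
    V' / 2 ≤ ∑ j ∈ (Finset.range N).filter (fun j => C₀ * a / 2 ^ (K + 1) < m j), m j := by
  classical
  have hsplit := Finset.sum_filter_add_sum_filter_not (Finset.range N)
    (fun j => C₀ * a / 2 ^ (K + 1) < m j) m
  set Gc := (Finset.range N).filter (fun j => ¬ C₀ * a / 2 ^ (K + 1) < m j) with hGc
  have htail : ∑ j ∈ Gc, m j ≤ (N : ℝ) * (a * δ ^ 2 / 8) := by
    calc ∑ j ∈ Gc, m j ≤ ∑ _j ∈ Gc, (a * δ ^ 2 / 8) := by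
          apply Finset.sum_le_sum
          intro j hj
          have := (Finset.mem_filter.1 hj).2
          push_neg at this
          linarith
      _ = (Gc.card : ℝ) * (a * δ ^ 2 / 8) := by
          rw [Finset.sum_const, nsmul_eq_mul]
      _ ≤ (N : ℝ) * (a * δ ^ 2 / 8) := by
          apply mul_le_mul_of_nonneg_right _ (by positivity)
          exact_mod_cast (Finset.card_filter_le _ _).trans (le_of_eq (Finset.card_range N))
  have hNbound : (N : ℝ) * (a * δ ^ 2 / 8) ≤ a / 4 := by
    calc (N : ℝ) * (a * δ ^ 2 / 8) ≤ (2 / δ) * (a * δ ^ 2 / 8) := by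
          apply mul_le_mul_of_nonneg_right hNle (by positivity)
      _ = a * δ / 4 := by field_simp; ring
      _ ≤ a / 4 := by nlinarith
  have h4 : a / 4 ≤ V' / 4 := by linarith
  linarith [hsplit, htail, hNbound]

section Body
open Tube Tube2

set_option maxHeartbeats 1000000 in
theorem body (ε ε' C₀ : ℝ) (hε : ε ∈ Set.Ioo (0 : ℝ) 1) (hε'pos : 0 < ε') (hε'ε : ε' < ε)
    (hC₀ : 1 ≤ C₀) (δ : ℝ) (hδ : 0 < δ) (hδ1 : δ < 1)
    (hElog : Real.log (4 * C₀) + 4 ≤ Real.log δ⁻¹) (hE10 : 10 ≤ Real.log δ⁻¹)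
    (hE3 : 20 * C₀ * Real.log δ⁻¹ ≤ δ ^ (-(ε' / 4)))
    (T : Tube) (Y Y' : Set (EuclideanSpace ℝ (Fin 3)))
    (hYm : MeasurableSet Y) (hYT : Y ⊆ T.toSet δ)
    (hQ : QuantTwoEnds δ ε ε' C₀ T Y)
    (hY'm : MeasurableSet Y') (hY'Y : Y' ⊆ Y)
    (hYY' : ENNReal.ofReal (δ ^ (ε' / 4)) * volume Y ≤ volume Y') :
    ∃ Y'' : Set (EuclideanSpace ℝ (Fin 3)),
      MeasurableSet Y'' ∧ Y'' ⊆ Y' ∧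
      QuantTwoEnds δ ε (ε' / 2) 2 T Y'' ∧
      ENNReal.ofReal ((20 * Real.log δ⁻¹)⁻¹) * volume Y' ≤ volume Y'' := by
  classical
  obtain ⟨⟨a, ha, hab⟩, hcard⟩ := hQ
  have hC₀pos : (0:ℝ) < C₀ := lt_of_lt_of_le one_pos hC₀
  have hεpos : (0:ℝ) < ε := hε.1
  have hεlt1 : ε < 1 := hε.2
  set N := ⌈δ ^ (-ε)⌉₊ with hN
  set m : ℕ → ℝ := fun j => (volume (Y' ∩ T.seg δ ε j)).toReal with hmdef
  have hYsegle : ∀ j ∈ Finset.range N, volume (Y ∩ T.seg δ ε j) ≤ ENNReal.ofReal (C₀ * a) := by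
    intro j hj
    rcases eq_or_lt_of_le (zero_le : 0 ≤ volume (Y ∩ T.seg δ ε j)) with h | h
    · rw [← h]; exact zero_le
    · exact (hab j (Finset.mem_range.1 hj) h).2
  have hvolle : ∀ j ∈ Finset.range N, volume (Y' ∩ T.seg δ ε j) ≤ ENNReal.ofReal (C₀ * a) :=
    fun j hj => le_trans (measure_mono (inter_subset_inter_left _ hY'Y)) (hYsegle j hj)
  have hvolfin : ∀ j ∈ Finset.range N, volume (Y' ∩ T.seg δ ε j) ≠ ⊤ :=
    fun j hj => ne_top_of_le_ne_top ENNReal.ofReal_ne_top (hvolle j hj)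
  have hvol : ∀ j ∈ Finset.range N, volume (Y' ∩ T.seg δ ε j) = ENNReal.ofReal (m j) :=
    fun j hj => (ENNReal.ofReal_toReal (hvolfin j hj)).symm
  have hmle : ∀ j ∈ Finset.range N, m j ≤ C₀ * a := by
    intro j hj
    have := ENNReal.toReal_mono ENNReal.ofReal_ne_top (hvolle j hj)
    rwa [ENNReal.toReal_ofReal (by positivity)] at this
  have hmnn : ∀ j, 0 ≤ m j := fun j => ENNReal.toReal_nonneg
  -- decompositions
  have hYdec := measure_decomp T hδ hδ1 hεpos hYm hYT
  have hY'dec := measure_decomp T hδ hδ1 hεpos hY'm (hY'Y.trans hYT)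
  have hYfin : volume Y ≠ ⊤ := by
    rw [hYdec]
    exact (ENNReal.sum_lt_top.mpr fun j hj =>
      lt_of_le_of_lt (hYsegle j hj) ENNReal.ofReal_lt_top).ne
  have hY'fin : volume Y' ≠ ⊤ := ne_top_of_le_ne_top hYfin (measure_mono hY'Y)
  set V : ℝ := (volume Y).toReal with hV
  set V' : ℝ := (volume Y').toReal with hV'
  have hV'sum : V' = ∑ j ∈ Finset.range N, m j := by
    rw [hV', hY'dec]
    exact ENNReal.toReal_sum hvolfin
  have hV'nn : 0 ≤ V' := ENNReal.toReal_nonneg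
  -- lower bound for V
  set P : Finset ℕ := (Finset.range N).filter (fun j => 0 < volume (Y ∩ T.seg δ ε j)) with hP
  have hPcard : δ ^ (-ε') ≤ (P.card : ℝ) := by
    have hset : {j : ℕ | j < N ∧ 0 < volume (Y ∩ T.seg δ ε j)} = ↑P := by
      ext j; simp [hP, Finset.mem_filter, Finset.mem_range]
    rw [hset, Set.ncard_coe_finset] at hcard
    exact hcard
  have hVP : (P.card : ℝ) * a ≤ V := by
    have h1 : (P.card : ℕ) • ENNReal.ofReal a ≤ ∑ j ∈ P, volume (Y ∩ T.seg δ ε j) := by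
      apply Finset.card_nsmul_le_sum
      intro j hj
      rw [hP, Finset.mem_filter] at hj
      exact (hab j (Finset.mem_range.1 hj.1) hj.2).1
    have h2 : ∑ j ∈ P, volume (Y ∩ T.seg δ ε j) ≤ volume Y := by
      rw [hYdec]
      exact Finset.sum_le_sum_of_subset (Finset.filter_subset _ _)
    have h3 : ENNReal.ofReal ((P.card : ℝ) * a) ≤ volume Y := by
      refine le_trans ?_ (h1.trans h2)
      rw [ENNReal.ofReal_mul (by positivity), nsmul_eq_mul, ENNReal.ofReal_natCast]
    have := ENNReal.toReal_mono hYfin h3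
    rwa [ENNReal.toReal_ofReal (by positivity)] at this
  have hV'V : δ ^ (ε' / 4) * V ≤ V' := by
    have := ENNReal.toReal_mono hY'fin hYY'
    rwa [ENNReal.toReal_mul, ENNReal.toReal_ofReal (by positivity)] at this
  have hV'a : δ ^ (-(3 * ε' / 4)) * a ≤ V' := by
    have h1 : δ ^ (ε' / 4) * (δ ^ (-ε') * a) ≤ δ ^ (ε' / 4) * V := by
      apply mul_le_mul_of_nonneg_left _ (Real.rpow_nonneg hδ.le _)
      calc δ ^ (-ε') * a ≤ (P.card : ℝ) * a := by
            apply mul_le_mul_of_nonneg_right hPcard ha.le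
        _ ≤ V := hVP
    calc δ ^ (-(3 * ε' / 4)) * a = δ ^ (ε' / 4) * (δ ^ (-ε') * a) := by
          rw [← mul_assoc, ← Real.rpow_add hδ]; ring_nf
      _ ≤ V' := h1.trans hV'V
  have hone_le : (1:ℝ) ≤ δ ^ (-(3 * ε' / 4)) :=
    Real.one_le_rpow_of_pos_of_le_one_of_nonpos hδ hδ1.le (by linarith)
  have haV' : a ≤ V' := by nlinarith
  -- dyadic levels
  set K : ℕ := ⌈Real.logb 2 (4 * C₀ / δ ^ 2)⌉₊ with hKdef
  obtain ⟨hK1, hK2⟩ := dyadicK C₀ δ hC₀ hδ hδ1 hElog hE10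
  have hlogδpos : (0:ℝ) < Real.log δ⁻¹ := by linarith
  have hNle : (N : ℝ) ≤ 2 / δ := by
    have h1 : (N : ℝ) < δ ^ (-ε) + 1 := Nat.ceil_lt_add_one (Real.rpow_nonneg hδ.le _)
    have h2 : δ ^ (-ε) ≤ δ ^ (-(1:ℝ)) :=
      Real.rpow_le_rpow_of_exponent_ge hδ hδ1.le (by linarith)
    have h3 : δ ^ (-(1:ℝ)) = δ⁻¹ := by
      rw [Real.rpow_neg hδ.le, Real.rpow_one]
    have h4 : (1:ℝ) ≤ δ⁻¹ := (one_le_inv₀ hδ).2 hδ1.le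
    rw [div_eq_mul_inv]
    nlinarith [h2.trans_eq h3]
  have hlvK : C₀ * a / 2 ^ (K + 1) ≤ a * δ ^ 2 / 8 := by
    rw [div_le_div_iff₀ (by positivity) (by norm_num)]
    calc C₀ * a * 8 = a * δ ^ 2 * (8 * C₀ / δ ^ 2) := by field_simp
      _ ≤ a * δ ^ 2 * 2 ^ (K + 1) := by
          apply mul_le_mul_of_nonneg_left hK1 (by positivity)
  have hGsum := tail_bound N K m C₀ a δ V' hδ hδ1 ha hC₀ hmnn hNle hlvK hV'sum haV'
  obtain ⟨k, hkK, hLsum⟩ :=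
    pigeonhole N K m (C₀ * a) (by positivity) (V' / 2) hmnn hmle hGsum
  set L : Finset ℕ :=
    (Finset.range N).filter
      (fun j => C₀ * a / 2 ^ (k + 1) < m j ∧ m j ≤ C₀ * a / 2 ^ k) with hLdef
  have hLsub : L ⊆ Finset.range N := Finset.filter_subset _ _
  -- the new shading
  refine ⟨⋃ j ∈ L, (Y' ∩ T.seg δ ε j), ?_, ?_, ?_, ?_⟩
  · exact L.measurableSet_biUnion
      (fun j _ => hY'm.inter (T.seg_measurable δ ε j))
  · exact iUnion₂_subset fun j _ => inter_subset_left
  · -- two-ends property of Y''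
    have hseg : ∀ j : ℕ, (⋃ i ∈ L, (Y' ∩ T.seg δ ε i)) ∩ T.seg δ ε j =
        if j ∈ L then Y' ∩ T.seg δ ε j else ∅ := by
      intro j
      split_ifs with hjL
      · ext x
        simp only [mem_inter_iff, mem_iUnion, exists_prop]
        constructor
        · rintro ⟨⟨i, hiL, hxY', hxi⟩, hxj⟩
          exact ⟨hxY', hxj⟩
        · rintro ⟨hxY', hxj⟩
          exact ⟨⟨j, hjL, hxY', hxj⟩, hxj⟩
      · ext x
        simp only [mem_inter_iff, mem_iUnion, exists_prop, mem_empty_iff_false, iff_false,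
          not_and]
        rintro ⟨i, hiL, hxY', hxi⟩ hxj
        have hij : i ≠ j := fun h => hjL (h ▸ hiL)
        exact Set.disjoint_left.1 (T.seg_disjoint hδ hij) hxi hxj
    constructor
    · refine ⟨C₀ * a / 2 ^ (k + 1), by positivity, ?_⟩
      intro j hjN hpos
      rw [hseg j] at hpos ⊢
      by_cases hjL : j ∈ L
      · rw [if_pos hjL] at hpos ⊢
        have hj' := (Finset.mem_filter.1 hjL).2
        have hjr := hLsub hjL
        rw [hvol j hjr]
        refine ⟨ENNReal.ofReal_le_ofReal hj'.1.le, ?_⟩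
        apply ENNReal.ofReal_le_ofReal
        have h2k : (2:ℝ) * (C₀ * a / 2 ^ (k + 1)) = C₀ * a / 2 ^ k := by
          rw [pow_succ]; field_simp
        rw [h2k]
        exact hj'.2
      · rw [if_neg hjL] at hpos
        simp at hpos
    · have hsetL : {j : ℕ | j < N ∧
          0 < volume ((⋃ i ∈ L, (Y' ∩ T.seg δ ε i)) ∩ T.seg δ ε j)} = ↑L := by
        ext j
        simp only [mem_setOf_eq, Finset.mem_coe]
        constructor
        · rintro ⟨hjN, hpos⟩
          by_contra hjL
          rw [hseg j, if_neg hjL] at hpos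
          simp at hpos
        · intro hjL
          refine ⟨Finset.mem_range.1 (hLsub hjL), ?_⟩
          rw [hseg j, if_pos hjL, hvol j (hLsub hjL)]
          apply ENNReal.ofReal_pos.2
          have hlow := (Finset.mem_filter.1 hjL).2.1
          have hlvp : (0:ℝ) < C₀ * a / 2 ^ (k + 1) := by positivity
          linarith
      rw [hsetL, Set.ncard_coe_finset]
      apply card_bound (L.card) K C₀ a δ ε' V' hδ ha hC₀ hε'pos hlogδpos ?_ hK2 hE3 hV'a
      have hsum_le : ∑ j ∈ L, m j ≤ (L.card : ℝ) * (C₀ * a) := by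
        calc ∑ j ∈ L, m j ≤ ∑ _j ∈ L, (C₀ * a) :=
              Finset.sum_le_sum (fun j hj => hmle j (hLsub hj))
          _ = L.card * (C₀ * a) := by rw [Finset.sum_const, nsmul_eq_mul]
      have hdd : V' / 2 / ((K:ℝ) + 1) = V' / (2 * ((K:ℝ) + 1)) := by rw [div_div]
      linarith [hLsum]
  · -- measure lower bound
    have hY''vol : volume (⋃ j ∈ L, (Y' ∩ T.seg δ ε j)) =
        ∑ j ∈ L, volume (Y' ∩ T.seg δ ε j) := by
      apply measure_biUnion_finset (μ := volume)
      · intro i _ j _ hij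
        exact (T.seg_disjoint hδ hij).mono inter_subset_right inter_subset_right
      · exact fun j _ => hY'm.inter (T.seg_measurable δ ε j)
    have hsum_of : ∑ j ∈ L, volume (Y' ∩ T.seg δ ε j) = ENNReal.ofReal (∑ j ∈ L, m j) := by
      rw [ENNReal.ofReal_sum_of_nonneg (fun j _ => hmnn j)]
      exact Finset.sum_congr rfl (fun j hj => hvol j (hLsub hj))
    rw [hY''vol, hsum_of]
    have h20 : (0:ℝ) < 20 * Real.log δ⁻¹ := by linarith
    have hv' : volume Y' = ENNReal.ofReal V' := (ENNReal.ofReal_toReal hY'fin).symm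
    rw [hv', ← ENNReal.ofReal_mul (inv_nonneg.2 h20.le)]
    apply ENNReal.ofReal_le_ofReal
    have hKpos : (0:ℝ) < 2 * ((K:ℝ) + 1) := by positivity
    have hinv : (20 * Real.log δ⁻¹)⁻¹ ≤ (2 * ((K:ℝ) + 1))⁻¹ := by
      apply inv_anti₀ hKpos hK2
    have hmul : (20 * Real.log δ⁻¹)⁻¹ * V' ≤ (2 * ((K:ℝ) + 1))⁻¹ * V' :=
      mul_le_mul_of_nonneg_right hinv hV'nn
    have heq : (2 * ((K:ℝ) + 1))⁻¹ * V' = V' / 2 / ((K:ℝ) + 1) := by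
      rw [div_div]; ring
    linarith [hLsum]

end Body

open Filter in
lemma delta0_exists (ε' C₀ : ℝ) (hε' : 0 < ε') (hC₀ : 1 ≤ C₀) :
    ∃ δ₀ : ℝ, 0 < δ₀ ∧ ∀ δ : ℝ, 0 < δ → δ < δ₀ →
      (δ < 1 ∧ Real.log (4 * C₀) + 4 ≤ Real.log δ⁻¹ ∧ 10 ≤ Real.log δ⁻¹ ∧
        20 * C₀ * Real.log δ⁻¹ ≤ δ ^ (-(ε' / 4))) := by
  have hC₀pos : (0:ℝ) < C₀ := lt_of_lt_of_le one_pos hC₀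
  have hloginv : Tendsto (fun δ : ℝ => Real.log δ⁻¹) (nhdsWithin 0 (Set.Ioi 0)) atTop :=
    Real.tendsto_log_atTop.comp tendsto_inv_nhdsGT_zero
  have h1 : ∀ᶠ δ : ℝ in nhdsWithin 0 (Set.Ioi 0), δ < 1 :=
    Filter.Eventually.filter_mono nhdsWithin_le_nhds (gt_mem_nhds zero_lt_one)
  have h2 : ∀ᶠ δ : ℝ in nhdsWithin 0 (Set.Ioi 0), Real.log (4 * C₀) + 4 ≤ Real.log δ⁻¹ :=
    hloginv.eventually_ge_atTop _
  have h3 : ∀ᶠ δ : ℝ in nhdsWithin 0 (Set.Ioi 0), 10 ≤ Real.log δ⁻¹ :=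
    hloginv.eventually_ge_atTop _
  have h4 : ∀ᶠ δ : ℝ in nhdsWithin 0 (Set.Ioi 0),
      20 * C₀ * Real.log δ⁻¹ ≤ δ ^ (-(ε' / 4)) := by
    have hlo := isLittleO_log_rpow_nhdsGT_zero (r := -(ε'/4)) (by linarith)
    have hb := hlo.bound (c := (20 * C₀)⁻¹) (by positivity)
    filter_upwards [hb, self_mem_nhdsWithin] with δ hδb (hδ : 0 < δ)
    have hrpos : (0:ℝ) < δ ^ (-(ε'/4)) := Real.rpow_pos_of_pos hδ _
    rw [Real.norm_eq_abs, Real.norm_eq_abs, abs_of_pos hrpos] at hδb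
    have : Real.log δ⁻¹ ≤ |Real.log δ| := by
      rw [Real.log_inv]; exact neg_le_abs _
    calc 20 * C₀ * Real.log δ⁻¹ ≤ 20 * C₀ * |Real.log δ| := by
          apply mul_le_mul_of_nonneg_left this (by positivity)
      _ ≤ 20 * C₀ * ((20 * C₀)⁻¹ * δ ^ (-(ε'/4))) := by
          apply mul_le_mul_of_nonneg_left hδb (by positivity)
      _ = δ ^ (-(ε'/4)) := by field_simp
  have hall := (h1.and (h2.and (h3.and h4)))
  rw [eventually_nhdsWithin_iff, Metric.eventually_nhds_iff] at hall
  obtain ⟨δ₀, hδ₀, hP⟩ := hall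
  refine ⟨δ₀, hδ₀, fun δ hδ hδlt => ?_⟩
  have := hP (y := δ) (by rwa [Real.dist_eq, sub_zero, abs_of_pos hδ]) hδ
  exact ⟨this.1, this.2.1, this.2.2.1, this.2.2.2⟩

/-- **Stability of the two-ends condition under passing to large subsets.** If
`Y` is a quantitative two-ends shading of a `δ×δ×1` tube at scale `ε'` with
constant `C₀` and `Y' ⊆ Y` has `|Y'| ≥ δ^{ε'/4}|Y|`, then a further subset
`Y'' ⊆ Y'` of measure `≥ (C log δ⁻¹)⁻¹|Y'|` is quantitative two-ends at scale
`ε'/2` with constant `2`. -/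
theorem two_ends_stable_under_subsets :
    ∃ C : ℝ, 0 < C ∧
      ∀ ε ε' C₀ : ℝ, ε ∈ Set.Ioo (0 : ℝ) 1 → ε ^ (100 : ℕ) < ε' → ε' < ε → 1 ≤ C₀ →
      ∃ δ₀ : ℝ, 0 < δ₀ ∧
        ∀ δ : ℝ, 0 < δ → δ < δ₀ →
        ∀ (T : Tube) (Y Y' : Set (EuclideanSpace ℝ (Fin 3))),
          MeasurableSet Y → Y ⊆ T.toSet δ → QuantTwoEnds δ ε ε' C₀ T Y →
          MeasurableSet Y' → Y' ⊆ Y →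
          ENNReal.ofReal (δ ^ (ε' / 4)) * volume Y ≤ volume Y' →
          ∃ Y'' : Set (EuclideanSpace ℝ (Fin 3)),
            MeasurableSet Y'' ∧ Y'' ⊆ Y' ∧
            QuantTwoEnds δ ε (ε' / 2) 2 T Y'' ∧
            ENNReal.ofReal ((C * Real.log δ⁻¹)⁻¹) * volume Y' ≤ volume Y'' := by
  refine ⟨20, by norm_num, ?_⟩
  intro ε ε' C₀ hε hε100 hε'ε hC₀
  have hε'pos : 0 < ε' := lt_trans (pow_pos hε.1 100) hε100
  obtain ⟨δ₀, hδ₀, hδP⟩ := delta0_exists ε' C₀ hε'pos hC₀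
  refine ⟨δ₀, hδ₀, ?_⟩
  intro δ hδ hδlt T Y Y' hYm hYT hQ hY'm hY'Y hYY'
  obtain ⟨h1, h2, h3, h4⟩ := hδP δ hδ hδlt
  exact body ε ε' C₀ hε hε'pos hε'ε hC₀ δ hδ h1 h2 h3 h4 T Y Y' hYm hYT hQ hY'm hY'Y hYY'
end

section
/- Numerology for the intermediate-scale case: Let 45/14 < p < 10/3. Then for all real numbers R ≥ 1, r > 0, D > 0, λ > 0 and 0 < η₁ ≤ r, setting M = min{ r^{3/4} λ^{-1} R^{-1/2}, r R^{-1/2} }, C₁ = R · r^{2-p} · λ · η₁^{(2-p)/4} · M^{(p-2)/2}, C₂ = D · r^{(5-2p)/2} · η₁^{(4-p)/4} · M^{(p-2)/2}, and C₃ = min{ D^{3-p}, D · R^{(2-p)/4} } · r^{(3-p)/2} · η₁^{(4-p)/4}, one has min{ C₁, C₂, C₃ } ≤ 1. -/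
set_option maxHeartbeats 2000000 in
/-- **Numerology for the intermediate-scale case.** For `45/14 < p < 10/3`
and all `R ≥ 1`, `r > 0`, `D > 0`, `λ > 0`, `0 < η₁ ≤ r`, with
`M = min{r^{3/4} λ⁻¹ R^{-1/2}, r R^{-1/2}}`, the minimum of
`C₁ = R r^{2-p} λ η₁^{(2-p)/4} M^{(p-2)/2}`,
`C₂ = D r^{(5-2p)/2} η₁^{(4-p)/4} M^{(p-2)/2}`, and
`C₃ = min{D^{3-p}, D R^{(2-p)/4}} r^{(3-p)/2} η₁^{(4-p)/4}` is at most `1`. -/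
theorem numerology_intermediate_scale (p : ℝ) (hp₁ : 45 / 14 < p) (hp₂ : p < 10 / 3)
    (R r D lam η₁ : ℝ) (hR : 1 ≤ R) (hr : 0 < r) (hD : 0 < D) (hlam : 0 < lam)
    (hη₁ : 0 < η₁) (hη₁r : η₁ ≤ r) :
    min (R * r ^ (2 - p) * lam * η₁ ^ ((2 - p) / 4) *
        (min (r ^ ((3 : ℝ) / 4) * lam⁻¹ * R ^ (-(1 : ℝ) / 2))
          (r * R ^ (-(1 : ℝ) / 2))) ^ ((p - 2) / 2))
      (min (D * r ^ ((5 - 2 * p) / 2) * η₁ ^ ((4 - p) / 4) *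
          (min (r ^ ((3 : ℝ) / 4) * lam⁻¹ * R ^ (-(1 : ℝ) / 2))
            (r * R ^ (-(1 : ℝ) / 2))) ^ ((p - 2) / 2))
        (min (D ^ (3 - p)) (D * R ^ ((2 - p) / 4)) *
          r ^ ((3 - p) / 2) * η₁ ^ ((4 - p) / 4))) ≤ 1 := by
  by_contra hcon
  push_neg at hcon
  have hRp : (0:ℝ) < R := lt_of_lt_of_le one_pos hR
  set X1 : ℝ := r ^ ((3 : ℝ) / 4) * lam⁻¹ * R ^ (-(1 : ℝ) / 2) with hX1def
  set X2 : ℝ := r * R ^ (-(1 : ℝ) / 2) with hX2def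
  have hX1 : 0 < X1 := by positivity
  have hX2 : 0 < X2 := by positivity
  have hM : 0 < min X1 X2 := lt_min hX1 hX2
  have hpe : 0 ≤ (p - 2) / 2 := by linarith
  obtain ⟨h1, h23⟩ := lt_min_iff.mp hcon
  obtain ⟨h2, h3⟩ := lt_min_iff.mp h23
  -- bounds replacing the mins
  have hT1 : (1:ℝ) < R * r ^ (2 - p) * lam * η₁ ^ ((2 - p) / 4) * X1 ^ ((p - 2) / 2) :=
    h1.trans_le (mul_le_mul_of_nonneg_left
      (Real.rpow_le_rpow hM.le (min_le_left _ _) hpe) (by positivity))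
  have hT2a : (1:ℝ) < D * r ^ ((5 - 2*p) / 2) * η₁ ^ ((4 - p) / 4) * X1 ^ ((p - 2) / 2) :=
    h2.trans_le (mul_le_mul_of_nonneg_left
      (Real.rpow_le_rpow hM.le (min_le_left _ _) hpe) (by positivity))
  have hT2b : (1:ℝ) < D * r ^ ((5 - 2*p) / 2) * η₁ ^ ((4 - p) / 4) * X2 ^ ((p - 2) / 2) :=
    h2.trans_le (mul_le_mul_of_nonneg_left
      (Real.rpow_le_rpow hM.le (min_le_right _ _) hpe) (by positivity))
  have hT3a : (1:ℝ) < D ^ (3 - p) * r ^ ((3 - p) / 2) * η₁ ^ ((4 - p) / 4) :=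
    h3.trans_le (by
      have : min (D ^ (3 - p)) (D * R ^ ((2 - p) / 4)) ≤ D ^ (3 - p) := min_le_left _ _
      nlinarith [Real.rpow_pos_of_pos hr ((3 - p)/2), Real.rpow_pos_of_pos hη₁ ((4 - p)/4),
        mul_le_mul_of_nonneg_right this (Real.rpow_pos_of_pos hr ((3 - p)/2)).le])
  -- take logs
  set lR := Real.log R
  set lr := Real.log r
  set lL := Real.log lam
  set lD := Real.log D
  set le := Real.log η₁
  have hlR : 0 ≤ lR := Real.log_nonneg hR
  have hle : le ≤ lr := Real.log_le_log hη₁ hη₁r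
  have eX1 : Real.log X1 = (3/4) * lr - lL - (1/2) * lR := by
    rw [hX1def, Real.log_mul (by positivity) (by positivity),
      Real.log_mul (by positivity) (by positivity), Real.log_rpow hr, Real.log_rpow hRp,
      Real.log_inv]
    ring
  have eX2 : Real.log X2 = lr - (1/2) * lR := by
    rw [hX2def, Real.log_mul (by positivity) (by positivity), Real.log_rpow hRp]
    ring
  have H1 : 0 < lR + (2 - p) * lr + lL + ((2 - p) / 4) * le
      + ((p - 2) / 2) * ((3/4) * lr - lL - (1/2) * lR) := by
    have := Real.log_pos hT1
    rw [Real.log_mul (by positivity) (by positivity), Real.log_mul (by positivity) (by positivity),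
      Real.log_mul (by positivity) (by positivity), Real.log_mul (by positivity) (by positivity),
      Real.log_rpow hr, Real.log_rpow hη₁, Real.log_rpow hX1, eX1] at this
    linarith
  have H2a : 0 < lD + ((5 - 2*p) / 2) * lr + ((4 - p) / 4) * le
      + ((p - 2) / 2) * ((3/4) * lr - lL - (1/2) * lR) := by
    have := Real.log_pos hT2a
    rw [Real.log_mul (by positivity) (by positivity), Real.log_mul (by positivity) (by positivity),
      Real.log_mul (by positivity) (by positivity),
      Real.log_rpow hr, Real.log_rpow hη₁, Real.log_rpow hX1, eX1] at this
    linarith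
  have H2b : 0 < lD + ((5 - 2*p) / 2) * lr + ((4 - p) / 4) * le
      + ((p - 2) / 2) * (lr - (1/2) * lR) := by
    have := Real.log_pos hT2b
    rw [Real.log_mul (by positivity) (by positivity), Real.log_mul (by positivity) (by positivity),
      Real.log_mul (by positivity) (by positivity),
      Real.log_rpow hr, Real.log_rpow hη₁, Real.log_rpow hX2, eX2] at this
    linarith
  have H3a : 0 < (3 - p) * lD + ((3 - p) / 2) * lr + ((4 - p) / 4) * le := by
    have := Real.log_pos hT3a
    rw [Real.log_mul (by positivity) (by positivity), Real.log_mul (by positivity) (by positivity),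
      Real.log_rpow hD, Real.log_rpow hr, Real.log_rpow hη₁] at this
    linarith
  -- weights
  have hA : (0:ℝ) < 10 - 3*p := by linarith
  have hB : (0:ℝ) < p - 2 := by linarith
  have hC : (0:ℝ) < p - 3 := by linarith
  have hE : (0:ℝ) < 4 - p := by linarith
  have hF : (0:ℝ) < 8*p - 25 := by linarith
  have hG : (0:ℝ) < 3*p - 5 := by linarith
  have hH : (0:ℝ) < 14*p - 45 := by linarith
  have hP : (0:ℝ) < p := by linarith
  have P1 : 0 < (4*(10-3*p)*(p-2)*(p-3)) * (lR + (2 - p) * lr + lL + ((2 - p) / 4) * le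
      + ((p - 2) / 2) * ((3/4) * lr - lL - (1/2) * lR)) :=
    mul_pos (mul_pos (mul_pos (mul_pos four_pos hA) hB) hC) H1
  have P2 : 0 < (4*(10-3*p)*(4-p)*(p-3)) * (lD + ((5 - 2*p) / 2) * lr + ((4 - p) / 4) * le
      + ((p - 2) / 2) * ((3/4) * lr - lL - (1/2) * lR)) :=
    mul_pos (mul_pos (mul_pos (mul_pos four_pos hA) hE) hC) H2a
  have P3 : 0 < (4*(p-3)*(8*p-25)) * (lD + ((5 - 2*p) / 2) * lr + ((4 - p) / 4) * le
      + ((p - 2) / 2) * (lr - (1/2) * lR)) :=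
    mul_pos (mul_pos (mul_pos four_pos hC) hF) H2b
  have P4 : 0 < (4*(3*p-5)*(p-3)) * ((3 - p) * lD + ((3 - p) / 2) * lr + ((4 - p) / 4) * le) :=
    mul_pos (mul_pos (mul_pos four_pos hG) hC) H3a
  have P5 : 0 ≤ ((p-3)*(14*p-45)*(p-2)) * lR := mul_nonneg (mul_pos (mul_pos hC hH) hB).le hlR
  have P6 : 0 ≤ (p*(p-2)*(p-3)) * (lr - le) := mul_nonneg (mul_pos (mul_pos hP hB) hC).le (by linarith)
  nlinarith [P1, P2, P3, P4, P5, P6]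
end
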